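/- Let A and B be invertible symmetric 3×3 matrices over k. Let c₁, c₂, d₁, d₂ ∈ k³ ∖ {0} satisfy: cᵢᵀA cᵢ = 0 and dᵢᵀB dᵢ = 0 for i = 1, 2; c₁ᵀB d₁ = 0; c₂ᵀB d₁ = 0; every nonzero x ∈ k³ with xᵀAx = 0 and xᵀB d₁ = 0 is a scalar multiple of c₁ or of c₂; c₂ᵀB d₂ = 0; and every nonzero y ∈ k³ with yᵀBy = 0 and c₂ᵀB y = 0 is a scalar multiple of d₁ or of d₂. Then (c₂ is a scalar multiple of c₁ and d₂ is a scalar multiple of d₁) if and only if (d₁ is a scalar multiple of c₁ and the vectors Ac₁ and Bc₁ are linearly dependent, i.e., the conics C_A and C_B are tangent at [c₁]). -/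

import Mathlib

open Matrix

section Helpers

variable {k : Type*} [Field k]

lemma bac_cab (u x c : Fin 3 → k) :
    u ⨯₃ (x ⨯₃ c) = (u ⬝ᵥ c) • x - (u ⬝ᵥ x) • c := by
  funext i
  fin_cases i <;>
    simp [cross_apply, dotProduct, Fin.sum_univ_three] <;> ring

lemma exists_smul_of_not_li {V : Type*} [AddCommGroup V] [Module k V] {u v : V}
    (h : ¬ LinearIndependent k ![u, v]) (hv : v ≠ 0) : ∃ t : k, u = t • v := by
  rw [LinearIndependent.pair_iff] at h
  push_neg at h
  obtain ⟨s, t, hst, hne⟩ := h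
  rcases eq_or_ne s 0 with rfl | hs
  · rcases eq_or_ne t 0 with rfl | ht
    · exact absurd rfl (hne rfl)
    · exact absurd (by simpa [ht] using hst) hv
  · refine ⟨-t / s, ?_⟩
    have h1 : s • u = (-t) • v := by
      rw [neg_smul, eq_neg_of_add_eq_zero_left hst]
    calc u = s⁻¹ • (s • u) := by rw [smul_smul, inv_mul_cancel₀ hs, one_smul]
    _ = (-t / s) • v := by rw [h1, smul_smul, div_eq_inv_mul]

lemma exists_smul_of_cross_eq_zero {u p : Fin 3 → k} (hp : p ≠ 0) (h : u ⨯₃ p = 0) :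
    ∃ t : k, u = t • p := by
  have : ¬ LinearIndependent k ![u, p] := fun hli =>
    (crossProduct_ne_zero_iff_linearIndependent.mpr hli) h
  exact exists_smul_of_not_li this hp

/-- Two vectors orthogonal (dot product) to a linearly independent pair in `k³` are
proportional. -/
lemma orth_pair {x c u v : Fin 3 → k} (hxc : LinearIndependent k ![x, c]) (hv : v ≠ 0)
    (hux : u ⬝ᵥ x = 0) (huc : u ⬝ᵥ c = 0) (hvx : v ⬝ᵥ x = 0) (hvc : v ⬝ᵥ c = 0) :
    ∃ t : k, u = t • v := by
  have hp : x ⨯₃ c ≠ 0 := crossProduct_ne_zero_iff_linearIndependent.mpr hxc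
  obtain ⟨a, ha⟩ := exists_smul_of_cross_eq_zero hp
    (by rw [bac_cab, hux, huc, zero_smul, zero_smul, sub_zero])
  obtain ⟨b, hb⟩ := exists_smul_of_cross_eq_zero hp
    (by rw [bac_cab, hvx, hvc, zero_smul, zero_smul, sub_zero])
  have hb0 : b ≠ 0 := by rintro rfl; simp at hb; exact hv hb
  exact ⟨a / b, by rw [ha, hb, smul_smul, div_mul_cancel₀ _ hb0]⟩

/-- In `k³` there is a vector orthogonal to `w ≠ 0` that is not a multiple of `d ≠ 0`. -/
lemma exists_orth_not_smul {w d : Fin 3 → k} (hw : w ≠ 0) (hd : d ≠ 0) :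
    ∃ z : Fin 3 → k, w ⬝ᵥ z = 0 ∧ ∀ s : k, z ≠ s • d := by
  obtain ⟨i, hi⟩ : ∃ i, w i ≠ 0 := by
    by_contra h; push_neg at h; exact hw (funext h)
  let f : (Fin 3 → k) →ₗ[k] k :=
    { toFun := fun z => w ⬝ᵥ z
      map_add' := fun a b => dotProduct_add w a b
      map_smul' := fun c a => by simp [dotProduct_smul] }
  have hsurj : Function.Surjective f := by
    intro c
    refine ⟨(c / w i) • (Pi.single i 1 : Fin 3 → k), ?_⟩
    simp only [f, LinearMap.coe_mk, AddHom.coe_mk, dotProduct_smul, dotProduct_single,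
      smul_eq_mul, mul_one]
    field_simp
  have hrange : LinearMap.range f = ⊤ := LinearMap.range_eq_top.mpr hsurj
  have hker : Module.finrank k (LinearMap.ker f) = 2 := by
    have := LinearMap.finrank_range_add_finrank_ker f
    rw [hrange, finrank_top, Module.finrank_self, Module.finrank_fin_fun] at this
    omega
  have hnotle : ¬ (LinearMap.ker f ≤ Submodule.span k {d}) := by
    intro hle
    have := Submodule.finrank_mono hle
    rw [hker, finrank_span_singleton hd] at this
    omega
  obtain ⟨z, hz1, hz2⟩ := SetLike.not_le_iff_exists.mp hnotle
  refine ⟨z, hz1, fun s hzs => hz2 ?_⟩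
  rw [Submodule.mem_span_singleton]
  exact ⟨s, hzs.symm⟩

lemma symm_dot {A : Matrix (Fin 3) (Fin 3) k} (hA : A.IsSymm) (x y : Fin 3 → k) :
    x ⬝ᵥ A *ᵥ y = y ⬝ᵥ A *ᵥ x := by
  calc x ⬝ᵥ A *ᵥ y = (x ᵥ* A) ⬝ᵥ y := dotProduct_mulVec _ _ _
  _ = (A *ᵥ x) ⬝ᵥ y := by rw [← Matrix.mulVec_transpose, hA.eq]
  _ = y ⬝ᵥ A *ᵥ x := dotProduct_comm _ _

lemma tangent_unique {A : Matrix (Fin 3) (Fin 3) k} (hA : A.IsSymm) (hAdet : IsUnit A.det)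
    {x c : Fin 3 → k} (_hx : x ≠ 0) (hc : c ≠ 0) (hxx : x ⬝ᵥ A *ᵥ x = 0)
    (hcc : c ⬝ᵥ A *ᵥ c = 0) (hxc : x ⬝ᵥ A *ᵥ c = 0) : ∃ s : k, x = s • c := by
  have hinj : Function.Injective A.mulVec :=
    Matrix.mulVec_injective_iff_isUnit.mpr ((Matrix.isUnit_iff_isUnit_det A).mpr hAdet)
  by_cases hli : LinearIndependent k ![x, c]
  · have hvc : A *ᵥ c ≠ 0 := fun h => hc (hinj (h.trans (Matrix.mulVec_zero A).symm))
    obtain ⟨t, ht⟩ := orth_pair (u := A *ᵥ x) (v := A *ᵥ c) hli hvc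
      (by rw [dotProduct_comm]; exact hxx)
      (by rw [dotProduct_comm, symm_dot hA]; exact hxc)
      (by rw [dotProduct_comm]; exact hxc)
      (by rw [dotProduct_comm]; exact hcc)
    exact ⟨t, hinj (by rw [Matrix.mulVec_smul, ← ht])⟩
  · exact exists_smul_of_not_li hli hc

lemma quad_root {M : Matrix (Fin 3) (Fin 3) k} (hM : M.IsSymm) (h2 : (2:k) ≠ 0)
    (d z : Fin 3 → k) (hd : d ⬝ᵥ M *ᵥ d = 0) (hne : d ⬝ᵥ M *ᵥ z ≠ 0) :
    ∃ α : k, (α • d + z) ⬝ᵥ M *ᵥ (α • d + z) = 0 := by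
  have hzd : z ⬝ᵥ M *ᵥ d = d ⬝ᵥ M *ᵥ z := symm_dot hM z d
  have expand : ∀ α : k, (α • d + z) ⬝ᵥ M *ᵥ (α • d + z) =
      α * α * (d ⬝ᵥ M *ᵥ d) + 2 * α * (d ⬝ᵥ M *ᵥ z) + z ⬝ᵥ M *ᵥ z := by
    intro α
    simp only [Matrix.mulVec_add, Matrix.mulVec_smul, dotProduct_add, add_dotProduct,
      dotProduct_smul, smul_dotProduct, smul_eq_mul, hzd]
    ring
  refine ⟨-(z ⬝ᵥ M *ᵥ z) / (2 * (d ⬝ᵥ M *ᵥ z)), ?_⟩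
  rw [expand, hd]
  generalize hX : d ⬝ᵥ M *ᵥ z = X at hne ⊢
  generalize z ⬝ᵥ M *ᵥ z = Z
  field_simp
  ring

end Helpers

/-- **Fixed points of the Poncelet step map are the tangency points.**
If `([c₂],[d₂])` is the image of `([c₁],[d₁])` under one step of the Poncelet process for the
smooth conics `C_A` and `C_B`, then the step fixes the point (projectively) if and only if
`[c₁] = [d₁]` is a point at which `C_A` and `C_B` are tangent. -/
theorem poncelet_step_fixed_point_iff_tangent {k : Type*} [Field k] [IsAlgClosed k]
    (hchar : (2 : k) ≠ 0)
    (A B : Matrix (Fin 3) (Fin 3) k) (hA : A.IsSymm) (hB : B.IsSymm)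
    (hAinv : IsUnit A.det) (hBinv : IsUnit B.det)
    (c₁ c₂ d₁ d₂ : Fin 3 → k)
    (hc₁ : c₁ ≠ 0) (hc₂ : c₂ ≠ 0) (hd₁ : d₁ ≠ 0) (hd₂ : d₂ ≠ 0)
    (hc₁A : c₁ ⬝ᵥ A.mulVec c₁ = 0) (hc₂A : c₂ ⬝ᵥ A.mulVec c₂ = 0)
    (hd₁B : d₁ ⬝ᵥ B.mulVec d₁ = 0) (hd₂B : d₂ ⬝ᵥ B.mulVec d₂ = 0)
    (h₁ : c₁ ⬝ᵥ B.mulVec d₁ = 0)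
    (h₂ : c₂ ⬝ᵥ B.mulVec d₁ = 0)
    (h₃ : ∀ x : Fin 3 → k, x ≠ 0 → x ⬝ᵥ A.mulVec x = 0 → x ⬝ᵥ B.mulVec d₁ = 0 →
      (∃ s : k, x = s • c₁) ∨ (∃ s : k, x = s • c₂))
    (h₄ : c₂ ⬝ᵥ B.mulVec d₂ = 0)
    (h₅ : ∀ y : Fin 3 → k, y ≠ 0 → y ⬝ᵥ B.mulVec y = 0 → c₂ ⬝ᵥ B.mulVec y = 0 →
      (∃ s : k, y = s • d₁) ∨ (∃ s : k, y = s • d₂)) :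
    ((∃ s : k, c₂ = s • c₁) ∧ (∃ s : k, d₂ = s • d₁)) ↔
      ((∃ s : k, d₁ = s • c₁) ∧ ¬ LinearIndependent k ![A.mulVec c₁, B.mulVec c₁]) := by
  have hBinj : Function.Injective B.mulVec :=
    Matrix.mulVec_injective_iff_isUnit.mpr ((Matrix.isUnit_iff_isUnit_det B).mpr hBinv)
  have hBne : ∀ x : Fin 3 → k, x ≠ 0 → B *ᵥ x ≠ 0 := fun x hx h =>
    hx (hBinj (h.trans (Matrix.mulVec_zero B).symm))
  constructor
  · rintro ⟨⟨s, hs⟩, ⟨t, ht⟩⟩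
    have hs0 : s ≠ 0 := fun h => hc₂ (by rw [hs, h, zero_smul])
    have ht0 : t ≠ 0 := fun h => hd₂ (by rw [ht, h, zero_smul])
    -- Step 1: d₁ is a multiple of c₁
    have hBc₂ : B *ᵥ c₂ ≠ 0 := hBne c₂ hc₂
    obtain ⟨z, hz1, hz2⟩ := exists_orth_not_smul hBc₂ hd₁
    have hz1' : c₂ ⬝ᵥ B *ᵥ z = 0 := by
      rw [symm_dot hB, dotProduct_comm]; exact hz1
    have hdz : d₁ ⬝ᵥ B *ᵥ z = 0 := by
      by_contra hne
      obtain ⟨α, hyB⟩ := quad_root hB hchar d₁ z hd₁B hne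
      have hy0 : α • d₁ + z ≠ 0 := fun h => hz2 (-α)
        (by rw [neg_smul, eq_neg_of_add_eq_zero_right h])
      have hyc : c₂ ⬝ᵥ B *ᵥ (α • d₁ + z) = 0 := by
        simp only [Matrix.mulVec_add, Matrix.mulVec_smul, dotProduct_add, dotProduct_smul,
          smul_eq_mul, h₂, hz1', mul_zero, add_zero]
      rcases h₅ _ hy0 hyB hyc with ⟨σ, hσ⟩ | ⟨σ, hσ⟩
      · exact hz2 (σ - α) (by rw [eq_sub_of_add_eq' hσ, ← sub_smul])
      · exact hz2 (σ * t - α)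
          (by rw [eq_sub_of_add_eq' hσ, ht, smul_smul, ← sub_smul])
    have hli : LinearIndependent k ![z, d₁] := by
      rw [linearIndependent_fin2]
      refine ⟨by simpa using hd₁, fun a ha => hz2 a ?_⟩
      simpa using ha.symm
    obtain ⟨τ, hτ⟩ := orth_pair (u := B *ᵥ d₁) (v := B *ᵥ c₂) hli hBc₂
      (by rw [dotProduct_comm]; exact (symm_dot hB z d₁).trans hdz)
      (by rw [dotProduct_comm]; exact hd₁B)
      hz1
      (by rw [dotProduct_comm, symm_dot hB]; exact h₂)
    have hd₁c₂ : d₁ = τ • c₂ := hBinj (by rw [Matrix.mulVec_smul, ← hτ])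
    have hr : d₁ = (τ * s) • c₁ := by rw [hd₁c₂, hs, smul_smul]
    refine ⟨⟨τ * s, hr⟩, ?_⟩
    -- Step 2: tangency
    have hr0 : τ * s ≠ 0 := fun h => hd₁ (by rw [hr, h, zero_smul])
    have hBc₁ : B *ᵥ c₁ ≠ 0 := hBne c₁ hc₁
    have hc₁Bc₁ : c₁ ⬝ᵥ B *ᵥ c₁ = 0 := by
      have := h₁
      rw [hr, Matrix.mulVec_smul, dotProduct_smul, smul_eq_mul] at this
      exact (mul_eq_zero.mp this).resolve_left hr0
    obtain ⟨z', hz1'', hz2'⟩ := exists_orth_not_smul hBc₁ hc₁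
    have hz1c : z' ⬝ᵥ B *ᵥ c₁ = 0 := by rw [dotProduct_comm]; exact hz1''
    have hcz : c₁ ⬝ᵥ A *ᵥ z' = 0 := by
      by_contra hne
      obtain ⟨α, hyA⟩ := quad_root hA hchar c₁ z' hc₁A hne
      have hy0 : α • c₁ + z' ≠ 0 := fun h => hz2' (-α)
        (by rw [neg_smul, eq_neg_of_add_eq_zero_right h])
      have hyB' : (α • c₁ + z') ⬝ᵥ B *ᵥ d₁ = 0 := by
        rw [hr, Matrix.mulVec_smul, dotProduct_smul]
        simp only [add_dotProduct, smul_dotProduct, smul_eq_mul, hc₁Bc₁, hz1c, mul_zero,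
          add_zero, smul_zero]
      rcases h₃ _ hy0 hyA hyB' with ⟨σ, hσ⟩ | ⟨σ, hσ⟩
      · exact hz2' (σ - α) (by rw [eq_sub_of_add_eq' hσ, ← sub_smul])
      · exact hz2' (σ * s - α)
          (by rw [eq_sub_of_add_eq' hσ, hs, smul_smul, ← sub_smul])
    have hli2 : LinearIndependent k ![z', c₁] := by
      rw [linearIndependent_fin2]
      refine ⟨by simpa using hc₁, fun a ha => hz2' a ?_⟩
      simpa using ha.symm
    obtain ⟨τ₂, hτ₂⟩ := orth_pair (u := A *ᵥ c₁) (v := B *ᵥ c₁) hli2 hBc₁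
      (by rw [dotProduct_comm]; exact (symm_dot hA z' c₁).trans hcz)
      (by rw [dotProduct_comm]; exact hc₁A)
      hz1''
      (by rw [dotProduct_comm]; exact hc₁Bc₁)
    intro hLI
    have := (LinearIndependent.pair_iff.mp hLI 1 (-τ₂)
      (by rw [hτ₂, one_smul, neg_smul, add_neg_cancel])).1
    exact one_ne_zero this
  · rintro ⟨⟨r, hr⟩, hdep⟩
    have hr0 : r ≠ 0 := fun h => hd₁ (by rw [hr, h, zero_smul])
    have hBc₁ : B *ᵥ c₁ ≠ 0 := hBne c₁ hc₁
    obtain ⟨μ, hμ⟩ := exists_smul_of_not_li hdep hBc₁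
    have hc₂Bc₁ : c₂ ⬝ᵥ B *ᵥ c₁ = 0 := by
      have := h₂
      rw [hr, Matrix.mulVec_smul, dotProduct_smul, smul_eq_mul] at this
      exact (mul_eq_zero.mp this).resolve_left hr0
    have hc₂Ac₁ : c₂ ⬝ᵥ A *ᵥ c₁ = 0 := by
      rw [show A *ᵥ c₁ = A.mulVec c₁ from rfl, hμ, dotProduct_smul, smul_eq_mul, hc₂Bc₁,
        mul_zero]
    obtain ⟨σ, hσ⟩ := tangent_unique hA hAinv hc₂ hc₁ hc₂A hc₁A hc₂Ac₁
    refine ⟨⟨σ, hσ⟩, ?_⟩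
    have hσ0 : σ ≠ 0 := fun h => hc₂ (by rw [hσ, h, zero_smul])
    have hc₁Bd₂ : c₁ ⬝ᵥ B *ᵥ d₂ = 0 := by
      have := h₄
      rw [hσ, smul_dotProduct, smul_eq_mul] at this
      exact (mul_eq_zero.mp this).resolve_left hσ0
    have hd₂Bd₁ : d₂ ⬝ᵥ B *ᵥ d₁ = 0 := by
      rw [hr, Matrix.mulVec_smul, dotProduct_smul, smul_eq_mul, symm_dot hB, hc₁Bd₂, mul_zero]
    exact tangent_unique hB hBinv hd₂ hd₁ hd₂B hd₁B hd₂Bd₁
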